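/- Let n, k, ν, L be positive integers with k < n, and let H_0, …, H_ν ∈ F^{(n−k)×n}. Form the partial parity-check matrix 𝔥 ∈ F^{(L+1)(n−k) × (ν+L+1)n} whose (s,t) block (for 0 ≤ s ≤ L, 0 ≤ t ≤ ν+L) is H_{ν−(t−s)} when 0 ≤ t−s ≤ ν and 0 otherwise. A full-size minor of 𝔥 formed by columns j_1 < ⋯ < j_{(L+1)(n−k)} is not trivially zero if and only if j_{(n−k)s+1} > sn and j_{(n−k)s} ≤ sn + νn for all s = 1, …, L. -/

import Mathlib

/-- The partial parity-check matrix `𝔥 ∈ F^{(L+1)(n-k) × (ν+L+1)n}` built from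
coefficient matrices `H 0, …, H ν ∈ F^{(n-k) × n}`: its `(s,t)` block (for
`0 ≤ s ≤ L`, `0 ≤ t ≤ ν+L`) is `H (ν - (t-s))` when `s ≤ t ≤ s + ν` and `0`
otherwise, i.e. the `s`-th block row is `[0 … 0 H_ν … H_0 0 … 0]`. -/
def ppcm (F : Type) [Field F] (n k ν L : ℕ)
    (H : Fin (ν + 1) → Matrix (Fin (n - k)) (Fin n) F) :
    Matrix (Fin ((L + 1) * (n - k))) (Fin ((ν + L + 1) * n)) F :=
  fun r c =>
    if h : (r : ℕ) % (n - k) < n - k ∧ (c : ℕ) % n < n ∧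
        (r : ℕ) / (n - k) ≤ (c : ℕ) / n ∧ (c : ℕ) / n ≤ (r : ℕ) / (n - k) + ν then
      H ⟨ν - ((c : ℕ) / n - (r : ℕ) / (n - k)), by omega⟩ ⟨_, h.1⟩ ⟨_, h.2.1⟩
    else 0

/-- The index conditions of Lemma `index`: for `s = 1,…,L` (in 1-based
numbering) `j_{(n-k)s+1} > sn` and `j_{(n-k)s} ≤ sn + νn`; here stated
0-based: the column at 0-based position `(n-k)s` has value `≥ sn`, and the
column at 0-based position `(n-k)s - 1` has value `< sn + νn`. -/
def colCond (n k ν L : ℕ) {A Nc : ℕ} (j : Fin A → Fin Nc) : Prop :=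
  ∀ l : Fin A, ∀ s : ℕ, 1 ≤ s → s ≤ L →
    ((l : ℕ) = (n - k) * s → s * n ≤ (j l : ℕ)) ∧
    ((l : ℕ) + 1 = (n - k) * s → (j l : ℕ) < s * n + ν * n)


open Finset

/-- Extract a permutation from equality of "exponent" finsupps. -/
lemma exists_perm_of_single_sum_eq {ι κ : Type*} [Fintype ι] [DecidableEq κ]
    (v w : ι → κ) (h : ∑ i, Finsupp.single (v i) (1:ℕ) = ∑ i, Finsupp.single (w i) 1) :
    ∃ τ : Equiv.Perm ι, ∀ i, w (τ i) = v i := by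
  classical
  have hcard : ∀ y : κ, Fintype.card {i // v i = y} = Fintype.card {i // w i = y} := by
    intro y
    have h0 := DFunLike.congr_fun h y
    rw [Finsupp.finset_sum_apply, Finsupp.finset_sum_apply] at h0
    simp only [Finsupp.single_apply] at h0
    rw [Fintype.card_subtype, Fintype.card_subtype, Finset.card_filter, Finset.card_filter]
    simpa [eq_comm] using h0
  have e : ∀ y, {i // v i = y} ≃ {i // w i = y} := fun y => Fintype.equivOfCardEq (hcard y)
  refine ⟨(Equiv.sigmaFiberEquiv v).symm.trans
    ((Equiv.sigmaCongrRight e).trans (Equiv.sigmaFiberEquiv w)), fun i => ?_⟩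
  simp only [Equiv.trans_apply, Equiv.sigmaFiberEquiv, Equiv.sigmaCongrRight,
    Equiv.coe_fn_symm_mk, Equiv.coe_fn_mk]
  exact (e (v i) ⟨i, rfl⟩).2

/-- Product of variables as a monomial. -/
lemma prod_X_eq_monomial {ι κ F : Type*} [CommSemiring F] (v : ι → κ) (s : Finset ι) :
    (∏ i ∈ s, (MvPolynomial.X (v i) : MvPolynomial κ F))
      = MvPolynomial.monomial (∑ i ∈ s, Finsupp.single (v i) 1) 1 := by
  classical
  induction s using Finset.cons_induction with
  | empty => simp
  | cons a s ha ih =>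
    rw [Finset.prod_cons, Finset.sum_cons, ih, MvPolynomial.X, MvPolynomial.monomial_mul, one_mul]

/-- A determinant vanishes if some set of columns is supported on fewer rows. -/
lemma det_zero_of_thin {ι F : Type*} [Fintype ι] [DecidableEq ι] [Field F]
    (M : Matrix ι ι F) (C R : Finset ι) (hcard : R.card < C.card)
    (hz : ∀ c ∈ C, ∀ r, r ∉ R → M r c = 0) : M.det = 0 := by
  classical
  rw [← Matrix.exists_mulVec_eq_zero_iff]
  have hni : ¬ LinearIndependent F (fun c : {x // x ∈ C} => fun r : {x // x ∈ R} => M r c) := by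
    intro h
    have h2 := h.fintype_card_le_finrank
    rw [Module.finrank_pi] at h2
    simp only [Fintype.card_coe] at h2
    omega
  rw [Fintype.not_linearIndependent_iff] at hni
  obtain ⟨g, hsum, i₀, hne⟩ := hni
  refine ⟨fun c => if h : c ∈ C then g ⟨c, h⟩ else 0, ?_, ?_⟩
  · intro h0
    apply hne
    have h1 := congrFun h0 (i₀ : ι)
    simpa [i₀.2] using h1
  · funext r
    show ∑ c, M r c * _ = 0
    by_cases hr : r ∈ R
    · have h1 := congrFun hsum ⟨r, hr⟩
      simp only [Finset.sum_apply, Pi.smul_apply, smul_eq_mul, Pi.zero_apply] at h1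
      rw [← Finset.sum_subset C.subset_univ (by intro x _ hx; simp [hx])]
      rw [← h1, ← Finset.sum_attach C (fun c => M r c * _), Finset.univ_eq_attach]
      apply Finset.sum_congr rfl
      intro c _
      rw [dif_pos c.2, mul_comm]
    · apply Finset.sum_eq_zero
      intro c _
      by_cases hc : c ∈ C
      · simp [hz c hc r hr]
      · simp [hc]

lemma band_of_colCond {n k ν L : ℕ} (hk : k < n)
    {j : Fin ((L + 1) * (n - k)) → Fin ((ν + L + 1) * n)} (hj : StrictMono j)
    (hcc : colCond n k ν L j) (l : Fin ((L + 1) * (n - k))) :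
    (l : ℕ)/(n-k) ≤ (j l : ℕ)/n ∧ (j l : ℕ)/n ≤ (l : ℕ)/(n-k) + ν := by
  have hm : 0 < n - k := by omega
  have hn : 0 < n := by omega
  set s : ℕ := (l : ℕ)/(n-k) with hs
  clear_value s
  have hsL : s ≤ L := by
    have h1 : (l : ℕ) < (L+1) * (n-k) := l.isLt
    have h2 : s < L + 1 := by
      rw [hs, Nat.div_lt_iff_lt_mul hm]
      calc (l : ℕ) < (L+1) * (n-k) := h1
      _ = (L+1) * (n-k) := rfl
    omega
  constructor
  · rcases Nat.eq_zero_or_pos s with h0 | h1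
    · simp [h0]
    · have hml : (n-k) * s ≤ (l : ℕ) := by
        rw [hs, mul_comm]
        exact Nat.div_mul_le_self _ _
      have hlt : (n-k) * s < (L+1) * (n-k) := lt_of_le_of_lt hml l.isLt
      have h3 := (hcc ⟨(n-k)*s, hlt⟩ s h1 hsL).1 rfl
      have hle : j ⟨(n-k)*s, hlt⟩ ≤ j l := hj.monotone (by simpa [Fin.le_def] using hml)
      rw [Nat.le_div_iff_mul_le hn]
      calc s * n ≤ (j ⟨(n-k)*s, hlt⟩ : ℕ) := h3
      _ ≤ (j l : ℕ) := hle
  · by_cases hsL' : s + 1 ≤ L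
    · have hpos : 0 < (n-k) * (s+1) := by positivity
      have hlt : (n-k)*(s+1) - 1 < (L+1) * (n-k) := by
        have h4 : (n-k)*(s+1) ≤ (n-k)*(L+1) := Nat.mul_le_mul_left _ (by omega)
        have h5 : (n-k)*(L+1) = (L+1)*(n-k) := mul_comm _ _
        omega
      have hlmul : (l : ℕ) < (n-k) * (s+1) := by
        rw [hs]
        exact Nat.lt_mul_div_succ _ hm
      have hll : (l : ℕ) ≤ (n-k)*(s+1) - 1 := by omega
      have h2 := (hcc ⟨(n-k)*(s+1) - 1, hlt⟩ (s+1) (by omega) hsL').2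
        (by show (n-k)*(s+1) - 1 + 1 = (n-k)*(s+1); omega)
      have hle : j l ≤ j ⟨(n-k)*(s+1)-1, hlt⟩ := hj.monotone (by simpa [Fin.le_def] using hll)
      have hjl : (j l : ℕ) < (s+1) * n + ν * n := by
        calc (j l : ℕ) ≤ _ := hle
        _ < (s+1)*n + ν*n := h2
      have h6 : (j l : ℕ)/n < s + 1 + ν := by
        rw [Nat.div_lt_iff_lt_mul hn]
        calc (j l : ℕ) < (s+1)*n + ν*n := hjl
        _ = (s+1+ν)*n := by ring
      omega
    · have hsL2 : s = L := by omega
      have h1 : (j l : ℕ) < (ν+L+1)*n := (j l).isLt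
      have h7 : (j l : ℕ)/n < ν+L+1 := by
        rw [Nat.div_lt_iff_lt_mul hn]
        calc (j l : ℕ) < (ν+L+1)*n := h1
        _ = (ν+L+1)*n := rfl
      omega

lemma det_zero_of_not_colCond {F : Type} [Field F] {n k ν L : ℕ} (hk : k < n)
    {j : Fin ((L + 1) * (n - k)) → Fin ((ν + L + 1) * n)} (hj : StrictMono j)
    (hncc : ¬ colCond n k ν L j) (H : Fin (ν + 1) → Matrix (Fin (n - k)) (Fin n) F) :
    ((ppcm F n k ν L H).submatrix id j).det = 0 := by
  have hm : 0 < n - k := by omega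
  have hn : 0 < n := by omega
  rw [colCond] at hncc
  push_neg at hncc
  obtain ⟨l, s, hs1, hsL, hviol⟩ := hncc
  by_cases hfirst : ((l : ℕ) = (n - k) * s → s * n ≤ (j l : ℕ))
  case neg =>
    push_neg at hfirst
    obtain ⟨hA1, hA2⟩ := hfirst
    apply det_zero_of_thin _ (Finset.Iic l) (Finset.Iio l)
    · rw [Fin.card_Iio, Fin.card_Iic]; omega
    · intro c hc r hr
      rw [Finset.mem_Iic] at hc
      rw [Finset.mem_Iio, not_lt] at hr
      rw [Matrix.submatrix_apply, id]
      have hrs : s ≤ (r : ℕ)/(n-k) := by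
        rw [Nat.le_div_iff_mul_le hm, Nat.mul_comm s (n-k)]
        have : (l : ℕ) ≤ (r : ℕ) := hr
        omega
      have hcs : ((j c : ℕ))/n < s := by
        rw [Nat.div_lt_iff_lt_mul hn, Nat.mul_comm s n] at *
        have : (j c : ℕ) ≤ (j l : ℕ) := hj.monotone hc
        omega
      rw [ppcm, dif_neg]
      rintro ⟨-, -, h3, -⟩
      omega
  case pos =>
    obtain ⟨hB1, hB2⟩ := hviol hfirst
    apply det_zero_of_thin _ (Finset.Ici l) (Finset.Ioi l)
    · rw [Fin.card_Ioi, Fin.card_Ici]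
      have := l.isLt; omega
    · intro c hc r hr
      rw [Finset.mem_Ici] at hc
      rw [Finset.mem_Ioi, not_lt] at hr
      rw [Matrix.submatrix_apply, id]
      have hrs : (r : ℕ)/(n-k) < s := by
        rw [Nat.div_lt_iff_lt_mul hm, Nat.mul_comm s (n-k)]
        have : (r : ℕ) ≤ (l : ℕ) := hr
        omega
      have hcs : s + ν ≤ ((j c : ℕ))/n := by
        rw [Nat.le_div_iff_mul_le hn]
        have h5 : (s+ν)*n = s*n + ν*n := add_mul _ _ _
        have : (j l : ℕ) ≤ (j c : ℕ) := hj.monotone hc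
        omega
      rw [ppcm, dif_neg]
      rintro ⟨-, -, -, h4⟩
      omega

lemma exists_det_ne_zero {F : Type} [Field F] [Infinite F] {n k ν L : ℕ} (hk : k < n)
    {j : Fin ((L + 1) * (n - k)) → Fin ((ν + L + 1) * n)} (hj : StrictMono j)
    (hcc : colCond n k ν L j) :
    ∃ H : Fin (ν + 1) → Matrix (Fin (n - k)) (Fin n) F,
      ((ppcm F n k ν L H).submatrix id j).det ≠ 0 := by
  classical
  have hm : 0 < n - k := by omega
  have hn : 0 < n := by omega
  have hband := band_of_colCond hk hj hcc
  set V := (Fin (ν + 1) × Fin (n - k) × Fin n) with hV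
  set Mp : Matrix (Fin ((L + 1) * (n - k))) (Fin ((L + 1) * (n - k))) (MvPolynomial V F) :=
    fun r i =>
      if h : (r : ℕ) / (n - k) ≤ (j i : ℕ) / n ∧ (j i : ℕ) / n ≤ (r : ℕ) / (n - k) + ν then
        MvPolynomial.X (⟨ν - ((j i : ℕ) / n - (r : ℕ) / (n - k)), by omega⟩,
          ⟨(r : ℕ) % (n - k), Nat.mod_lt _ hm⟩, ⟨(j i : ℕ) % n, Nat.mod_lt _ hn⟩)
      else 0 with hMp
  -- the key claim
  have key : Mp.det ≠ 0 := by
    set vdiag : Fin ((L + 1) * (n - k)) → V := fun l =>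
      (⟨ν - ((j l : ℕ) / n - (l : ℕ) / (n - k)), by omega⟩,
        ⟨(l : ℕ) % (n - k), Nat.mod_lt _ hm⟩, ⟨(j l : ℕ) % n, Nat.mod_lt _ hn⟩) with hvdiag
    set μ : V →₀ ℕ := ∑ l, Finsupp.single (vdiag l) 1 with hμ
    have hco : MvPolynomial.coeff μ Mp.det = 1 := by
      rw [Matrix.det_apply, MvPolynomial.coeff_sum]
      rw [Finset.sum_eq_single (1 : Equiv.Perm (Fin ((L + 1) * (n - k))))]
      · -- the identity term
        have hent : ∀ i, Mp i i = MvPolynomial.X (vdiag i) := by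
          intro i
          simp only [hMp]
          rw [dif_pos (hband i)]
        simp only [Equiv.Perm.sign_one, one_smul, Equiv.Perm.one_apply]
        rw [Finset.prod_congr rfl (fun i _ => hent i), prod_X_eq_monomial,
          MvPolynomial.coeff_monomial, if_pos rfl]
      · -- other permutations
        intro σ _ hσne
        rw [MvPolynomial.coeff_smul]
        rcases Classical.em (∀ i, (σ i : ℕ) / (n - k) ≤ (j i : ℕ) / n ∧
            (j i : ℕ) / n ≤ (σ i : ℕ) / (n - k) + ν) with hsupp | hsupp
        · set vs : Fin ((L + 1) * (n - k)) → V := fun i =>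
            (⟨ν - ((j i : ℕ) / n - (σ i : ℕ) / (n - k)), by omega⟩,
              ⟨(σ i : ℕ) % (n - k), Nat.mod_lt _ hm⟩, ⟨(j i : ℕ) % n, Nat.mod_lt _ hn⟩) with hvs
          have hent : ∀ i, Mp (σ i) i = MvPolynomial.X (vs i) := by
            intro i
            simp only [hMp]
            rw [dif_pos (hsupp i)]
          have hneq : (∑ i, Finsupp.single (vs i) 1) ≠ μ := by
            intro heq
            apply hσne
            rw [hμ] at heq
            obtain ⟨τ, hτ⟩ := exists_perm_of_single_sum_eq vs vdiag heq
            have hd : ∀ i, ν - ((j (τ i) : ℕ) / n - (τ i : ℕ) / (n - k))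
                = ν - ((j i : ℕ) / n - (σ i : ℕ) / (n - k)) := by
              intro i
              have h0 := congrArg (fun p : V => (p.1 : ℕ)) (hτ i)
              simpa [hvdiag, hvs] using h0
            have ha : ∀ i, (τ i : ℕ) % (n - k) = (σ i : ℕ) % (n - k) := by
              intro i
              have h0 := congrArg (fun p : V => (p.2.1 : ℕ)) (hτ i)
              simpa [hvdiag, hvs] using h0
            have hb : ∀ i, (j (τ i) : ℕ) % n = (j i : ℕ) % n := by
              intro i
              have h0 := congrArg (fun p : V => (p.2.2 : ℕ)) (hτ i)
              simpa [hvdiag, hvs] using h0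
            set mZ : ℤ := ((n - k : ℕ) : ℤ) with hmZ
            set nZ : ℤ := ((n : ℕ) : ℤ) with hnZ
            set Δ : Fin ((L + 1) * (n - k)) → ℤ := fun i =>
              (((σ i : ℕ) / (n - k) : ℕ) : ℤ) - (((τ i : ℕ) / (n - k) : ℕ) : ℤ) with hΔ
            have fσ : ∀ i, ((σ i : ℕ) : ℤ) = ((τ i : ℕ) : ℤ) + mZ * Δ i := by
              intro i
              have e1' : mZ * (((σ i : ℕ) / (n - k) : ℕ) : ℤ)
                  + (((σ i : ℕ) % (n - k) : ℕ) : ℤ) = ((σ i : ℕ) : ℤ) := by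
                rw [hmZ]; exact_mod_cast Nat.div_add_mod ((σ i : Fin _) : ℕ) (n - k)
              have e2' : mZ * (((τ i : ℕ) / (n - k) : ℕ) : ℤ)
                  + (((τ i : ℕ) % (n - k) : ℕ) : ℤ) = ((τ i : ℕ) : ℤ) := by
                rw [hmZ]; exact_mod_cast Nat.div_add_mod ((τ i : Fin _) : ℕ) (n - k)
              have e3' : (((τ i : ℕ) % (n - k) : ℕ) : ℤ) = (((σ i : ℕ) % (n - k) : ℕ) : ℤ) := by
                exact_mod_cast congrArg (Nat.cast : ℕ → ℤ) (ha i)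
              simp only [hΔ]
              linear_combination e2' - e1' - e3'
            have htq : ∀ i, (((j i : ℕ) / n : ℕ) : ℤ) = (((j (τ i) : ℕ) / n : ℕ) : ℤ) + Δ i := by
              intro i
              have h1 := hd i
              have h2 := hband (τ i)
              have h3 := hsupp i
              have h4 : (j i : ℕ) / n + (τ i : ℕ) / (n - k)
                  = (j (τ i) : ℕ) / n + (σ i : ℕ) / (n - k) := by omega
              simp only [hΔ]
              omega
            have fj : ∀ i, ((j i : ℕ) : ℤ) = ((j (τ i) : ℕ) : ℤ) + nZ * Δ i := by
              intro i
              have e1' : nZ * (((j i : ℕ) / n : ℕ) : ℤ) + (((j i : ℕ) % n : ℕ) : ℤ)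
                  = ((j i : ℕ) : ℤ) := by
                rw [hnZ]; exact_mod_cast Nat.div_add_mod ((j i : Fin _) : ℕ) n
              have e2' : nZ * (((j (τ i) : ℕ) / n : ℕ) : ℤ) + (((j (τ i) : ℕ) % n : ℕ) : ℤ)
                  = ((j (τ i) : ℕ) : ℤ) := by
                rw [hnZ]; exact_mod_cast Nat.div_add_mod ((j (τ i) : Fin _) : ℕ) n
              have e3' : (((j (τ i) : ℕ) % n : ℕ) : ℤ) = (((j i : ℕ) % n : ℕ) : ℤ) := by
                exact_mod_cast congrArg (Nat.cast : ℕ → ℤ) (hb i)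
              linear_combination e2' - e1' + nZ * (htq i) - e3'
            -- sum identities
            have S1 : ∑ i, ((σ i : ℕ) : ℤ)^2 = ∑ i : Fin ((L+1)*(n-k)), ((i : ℕ) : ℤ)^2 :=
              Equiv.sum_comp σ (fun x => ((x : ℕ) : ℤ)^2)
            have S2 : ∑ i, ((τ i : ℕ) : ℤ)^2 = ∑ i : Fin ((L+1)*(n-k)), ((i : ℕ) : ℤ)^2 :=
              Equiv.sum_comp τ (fun x => ((x : ℕ) : ℤ)^2)
            have S3 : ∑ i, ((j (τ i) : ℕ) : ℤ)^2 = ∑ i, ((j i : ℕ) : ℤ)^2 :=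
              Equiv.sum_comp τ (fun x => ((j x : ℕ) : ℤ)^2)
            have S4 : ∑ i, ((j (τ i) : ℕ) : ℤ) * ((τ i : ℕ) : ℤ)
                = ∑ i, ((j i : ℕ) : ℤ) * ((i : ℕ) : ℤ) :=
              Equiv.sum_comp τ (fun x => ((j x : ℕ) : ℤ) * ((x : ℕ) : ℤ))
            have E1 : ∑ i, (((σ i : ℕ) : ℤ)^2 - ((τ i : ℕ) : ℤ)^2
                - 2*mZ*(Δ i * ((τ i : ℕ) : ℤ)) - mZ^2*(Δ i)^2) = 0 :=
              Finset.sum_eq_zero (fun i _ => by rw [fσ i]; ring)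
            have E2 : ∑ i, (((j i : ℕ) : ℤ)^2 - ((j (τ i) : ℕ) : ℤ)^2
                - 2*nZ*(Δ i * ((j (τ i) : ℕ) : ℤ)) - nZ^2*(Δ i)^2) = 0 :=
              Finset.sum_eq_zero (fun i _ => by rw [fj i]; ring)
            have E3 : ∑ i, (((j i : ℕ) : ℤ) * ((σ i : ℕ) : ℤ)
                - ((j (τ i) : ℕ) : ℤ) * ((τ i : ℕ) : ℤ)
                - mZ*(Δ i * ((j (τ i) : ℕ) : ℤ)) - nZ*(Δ i * ((τ i : ℕ) : ℤ))
                - mZ*nZ*(Δ i)^2) = 0 :=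
              Finset.sum_eq_zero (fun i _ => by rw [fσ i, fj i]; ring)
            simp only [Finset.sum_sub_distrib, ← Finset.mul_sum] at E1 E2 E3
            have A1 : 2*mZ*(∑ i, Δ i * ((τ i : ℕ) : ℤ)) + mZ^2*(∑ i, (Δ i)^2) = 0 := by
              linear_combination S1 - S2 - E1
            have A2 : 2*nZ*(∑ i, Δ i * ((j (τ i) : ℕ) : ℤ)) + nZ^2*(∑ i, (Δ i)^2) = 0 := by
              linear_combination - E2 - S3
            have hmZpos : (0:ℤ) < mZ := by rw [hmZ]; exact_mod_cast hm
            have hnZpos : (0:ℤ) < nZ := by rw [hnZ]; exact_mod_cast hn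
            have hkey : ∑ i, ((j i : ℕ) : ℤ) * ((σ i : ℕ) : ℤ)
                = ∑ i, ((j i : ℕ) : ℤ) * ((i : ℕ) : ℤ) := by
              have hne0 : (2*mZ*nZ : ℤ) ≠ 0 := by positivity
              apply mul_left_cancel₀ hne0
              linear_combination 2*mZ*nZ*E3 + 2*mZ*nZ*S4 + nZ^2*A1 + mZ^2*A2
            -- rearrangement
            have hMono : Monovary (fun x : Fin ((L+1)*(n-k)) => ((j x : ℕ) : ℤ))
                (fun x : Fin ((L+1)*(n-k)) => ((x : ℕ) : ℤ)) := by
              intro x y h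
              have h' : ((x : ℕ) : ℤ) < ((y : ℕ) : ℤ) := h
              have hxy : x < y := Fin.lt_def.mpr (by exact_mod_cast h')
              show ((j x : ℕ) : ℤ) ≤ ((j y : ℕ) : ℤ)
              exact_mod_cast (hj hxy).le
            have hM2 := (hMono.sum_mul_comp_perm_eq_sum_mul_iff (σ := σ)).mp hkey
            have hinv : StrictMono (fun x : Fin ((L+1)*(n-k)) => σ⁻¹ x) := by
              intro u v huv
              have hlt : ((σ (σ⁻¹ u) : ℕ) : ℤ) < ((σ (σ⁻¹ v) : ℕ) : ℤ) := by
                rw [show σ (σ⁻¹ u) = u from σ.apply_symm_apply u, show σ (σ⁻¹ v) = v from σ.apply_symm_apply v]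
                exact_mod_cast Fin.lt_def.mp huv
              have h2 : ((j (σ⁻¹ u) : ℕ) : ℤ) ≤ ((j (σ⁻¹ v) : ℕ) : ℤ) := hM2 hlt
              have h3 : j (σ⁻¹ u) ≤ j (σ⁻¹ v) := by
                rw [Fin.le_def]
                exact_mod_cast h2
              have h4 : σ⁻¹ u ≤ σ⁻¹ v := hj.le_iff_le.mp h3
              exact lt_of_le_of_ne h4 (fun he => absurd ((σ⁻¹).injective he) (ne_of_lt huv))
            haveI : WellFoundedLT (Fin ((L+1)*(n-k))) := inferInstance
            have hle : ∀ x : Fin ((L+1)*(n-k)), x ≤ σ⁻¹ x := fun x =>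
              hinv.le_apply (x := x)
            have hsum2 : ∑ x : Fin ((L+1)*(n-k)), ((σ⁻¹ x : Fin _) : ℕ)
                = ∑ x : Fin ((L+1)*(n-k)), (x : ℕ) :=
              Equiv.sum_comp σ⁻¹ (fun x => (x : ℕ))
            have hpt := (Finset.sum_eq_sum_iff_of_le
              (fun i (_ : i ∈ Finset.univ) => Fin.le_def.mp (hle i))).mp hsum2.symm
            have hinv1 : σ⁻¹ = 1 := Equiv.ext fun x => Fin.ext ((hpt x (Finset.mem_univ x)).symm)
            exact inv_eq_one.mp hinv1
          rw [Finset.prod_congr rfl (fun i _ => hent i), prod_X_eq_monomial,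
            MvPolynomial.coeff_monomial, if_neg hneq, smul_zero]
        · push_neg at hsupp
          obtain ⟨i0, hbad⟩ := hsupp
          have hz : Mp (σ i0) i0 = 0 := by
            simp only [hMp]
            rw [dif_neg]
            intro h
            have := hbad h.1
            omega
          rw [Finset.prod_eq_zero (f := fun i => Mp (σ i) i) (Finset.mem_univ i0) hz, MvPolynomial.coeff_zero, smul_zero]
      · intro h
        exact absurd (Finset.mem_univ _) h
    intro h0
    rw [h0, MvPolynomial.coeff_zero] at hco
    exact one_ne_zero hco.symm
  -- transfer
  by_contra hne
  push_neg at hne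
  apply key
  apply MvPolynomial.funext (q := 0)
  intro φ
  rw [map_zero, RingHom.map_det]
  have hmap : (MvPolynomial.eval φ).mapMatrix Mp
      = (ppcm F n k ν L (fun d => Matrix.of fun a b => φ (d, a, b))).submatrix id j := by
    ext r i
    rw [RingHom.mapMatrix_apply, Matrix.map_apply]
    simp only [RingHom.mapMatrix_apply, Matrix.map_apply, Matrix.submatrix_apply, id_eq, hMp, ppcm]
    by_cases hC : (r : ℕ) / (n - k) ≤ (j i : ℕ) / n ∧ (j i : ℕ) / n ≤ (r : ℕ) / (n - k) + ν
    · rw [dif_pos hC, dif_pos ⟨Nat.mod_lt _ hm, Nat.mod_lt _ hn, hC.1, hC.2⟩]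
      simp [MvPolynomial.eval_X]
    · rw [dif_neg hC, dif_neg (fun h => hC ⟨h.2.2.1, h.2.2.2⟩), map_zero]
  rw [hmap]
  exact hne _

/-- A full-size minor of the partial parity-check matrix `𝔥`, formed by the
columns `j₁ < ⋯ < j_{(L+1)(n-k)}`, is not trivially zero (i.e. it is nonzero for
some choice of the free entries of `H_0, …, H_ν`) if and only if
`j_{(n-k)s+1} > sn` and `j_{(n-k)s} ≤ sn + νn` for all `s = 1, …, L`. -/

theorem ppcm_minor_not_trivially_zero_iff (F : Type) [Field F] [Infinite F]
    (n k ν L : ℕ) (hk : k < n) (hk0 : 0 < k) (hν : 0 < ν) (hL : 0 < L)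
    (j : Fin ((L + 1) * (n - k)) → Fin ((ν + L + 1) * n)) (hj : StrictMono j) :
    (∃ H : Fin (ν + 1) → Matrix (Fin (n - k)) (Fin n) F,
        ((ppcm F n k ν L H).submatrix id j).det ≠ 0) ↔ colCond n k ν L j := by
  constructor
  · rintro ⟨H, hH⟩
    by_contra hncc
    exact hH (det_zero_of_not_colCond hk hj hncc H)
  · intro hcc
    exact exists_det_ne_zero hk hj hcc
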